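/- Let A be a unital Banach algebra, A₀, B ∈ A with A₀ invertible, and L(x,t) = exp(A₀ x + A₀³ t) B. On the set where I ± L are invertible, Q := (I - L)⁻¹ A₀⁻¹ (I + L) satisfies the meta-mKdV equation Q_t = Q_xxx - 3 Q_xx Q⁻¹ Q_x. -/

import Mathlib

variable {A : Type*} [NormedRing A] [NormedAlgebra ℝ A] [CompleteSpace A]

/-- partial derivative in the first (space) variable -/
noncomputable def px (Q : ℝ × ℝ → A) : ℝ × ℝ → A := fun p => deriv (fun x => Q (x, p.2)) p.1

/-- partial derivative in the second (time) variable -/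
noncomputable def pt (Q : ℝ × ℝ → A) : ℝ × ℝ → A := fun p => deriv (fun t => Q (p.1, t)) p.2

/-- chain rule for `Ring.inverse` along a real parameter -/
theorem hasDerivAt_ring_inverse_comp {f : ℝ → A} {f' : A} {x : ℝ}
    (hf : HasDerivAt f f' x) (h : IsUnit (f x)) :
    HasDerivAt (fun y => Ring.inverse (f y))
      (-(Ring.inverse (f x) * f' * Ring.inverse (f x))) x := by
  obtain ⟨u, hu⟩ := h
  have h1 : HasFDerivAt Ring.inverse
      (-(ContinuousLinearMap.mulLeftRight ℝ A ↑u⁻¹ ↑u⁻¹)) (f x) :=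
    hu ▸ hasFDerivAt_ringInverse u
  have h2 := (h1.comp x hf.hasFDerivAt).hasDerivAt
  have h3 : Ring.inverse (f x) = (↑u⁻¹ : A) := by rw [← hu, Ring.inverse_unit]
  simpa [h3, ContinuousLinearMap.mulLeftRight_apply, Function.comp_def] using h2

theorem stmt_9 (A₀ B : A) (hA : IsUnit A₀)
    (L : ℝ × ℝ → A) (hL : L = fun p : ℝ × ℝ => NormedSpace.exp (p.1 • A₀ + p.2 • A₀ ^ 3) * B)
    (Q : ℝ × ℝ → A) (hQ : Q = fun p => Ring.inverse (1 - L p) * Ring.inverse A₀ * (1 + L p)) :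
    ∀ p : ℝ × ℝ, IsUnit (1 + L p) → IsUnit (1 - L p) →
      pt Q p = px (px (px Q)) p - 3 * (px (px Q) p * Ring.inverse (Q p) * px Q p) := by
  rintro ⟨x0, t0⟩ hP hM
  letI : NormedAlgebra ℚ A := NormedAlgebra.restrictScalars ℚ ℝ A
  simp only [hL] at hP hM
  set a : A := Ring.inverse A₀ with a_def
  have haA : a * A₀ = 1 := Ring.inverse_mul_cancel A₀ hA
  have hAa : A₀ * a = 1 := Ring.mul_inverse_cancel A₀ hA
  -- the space-line functions
  set l : ℝ → A := fun x => NormedSpace.exp (x • A₀ + t0 • A₀ ^ 3) * B with l_def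
  set n : ℝ → A := fun x => Ring.inverse (1 - l x) with n_def
  set g : ℝ → A := fun x => n x * A₀ with g_def
  set q : ℝ → A := fun x => n x * a * (1 + l x) with q_def
  set q1 : ℝ → A := fun x => g x * q x - n x with q1_def
  set q2 : ℝ → A := fun x => (g x * n x - g x) * A₀ * q x + g x * q1 x - (g x * n x - g x)
    with q2_def
  set S : Set ℝ := {x | IsUnit (1 - l x)} with S_def
  -- basic commutation and the derivative of l
  have hcomm : ∀ x t : ℝ, Commute (x • A₀) (t • A₀ ^ 3) := fun x t =>
    (((Commute.refl A₀).pow_right 3).smul_left x).smul_right t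
  have hlfun : l = fun x => NormedSpace.exp (x • A₀) *
      (NormedSpace.exp (t0 • A₀ ^ 3) * B) := by
    funext x
    simp only [l_def]
    rw [NormedSpace.exp_add_of_commute (hcomm x t0), mul_assoc]
  have hl' : ∀ x : ℝ, HasDerivAt l (A₀ * l x) x := by
    intro x
    rw [hlfun]
    simpa [mul_assoc] using
      (hasDerivAt_exp_smul_const' (𝕂 := ℝ) A₀ x).mul_const
        (NormedSpace.exp (t0 • A₀ ^ 3) * B)
  have hlcont : Continuous l := by
    rw [hlfun]
    exact (NormedSpace.exp_continuous.comp (continuous_id.smul continuous_const)).mul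
      continuous_const
  have hSopen : IsOpen S := by
    have : S = (fun x => 1 - l x) ⁻¹' {y : A | IsUnit y} := rfl
    rw [this]
    exact Units.isOpen.preimage (continuous_const.sub hlcont)
  have hx0S : x0 ∈ S := hM
  -- algebraic relations on S
  have hu1 : ∀ x ∈ S, n x * (1 - l x) = 1 := fun x hx => Ring.inverse_mul_cancel _ hx
  have hu2 : ∀ x ∈ S, (1 - l x) * n x = 1 := fun x hx => Ring.mul_inverse_cancel _ hx
  have hln : ∀ x ∈ S, l x * n x = n x - 1 := by
    intro x hx
    have h := hu2 x hx
    rw [sub_mul, one_mul] at h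
    calc l x * n x = n x - (n x - l x * n x) := by noncomm_ring
      _ = n x - 1 := by rw [h]
  have hnl : ∀ x ∈ S, n x * l x = n x - 1 := by
    intro x hx
    have h := hu1 x hx
    rw [mul_sub, mul_one] at h
    calc n x * l x = n x - (n x - n x * l x) := by noncomm_ring
      _ = n x - 1 := by rw [h]
  -- derivatives along the space line
  have hn' : ∀ x ∈ S, HasDerivAt n (g x * n x - g x) x := by
    intro x hx
    have h0 := hasDerivAt_ring_inverse_comp ((hl' x).const_sub 1) hx
    have e : -(n x * -(A₀ * l x) * n x) = g x * n x - g x := by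
      calc -(n x * -(A₀ * l x) * n x) = n x * A₀ * (l x * n x) := by noncomm_ring
        _ = n x * A₀ * (n x - 1) := by rw [hln x hx]
        _ = g x * n x - g x := by simp only [g_def]; noncomm_ring
    exact e ▸ h0
  have hg' : ∀ x ∈ S, HasDerivAt g ((g x * n x - g x) * A₀) x := fun x hx =>
    (hn' x hx).mul_const A₀
  have hq' : ∀ x ∈ S, HasDerivAt q (q1 x) x := by
    intro x hx
    have h0 := ((hn' x hx).mul_const a).mul ((hl' x).const_add 1)
    have hga : g x * a = n x := by simp only [g_def]; rw [mul_assoc, hAa, mul_one]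
    have e : (g x * n x - g x) * a * (1 + l x) + n x * a * (A₀ * l x) = q1 x := by
      calc (g x * n x - g x) * a * (1 + l x) + n x * a * (A₀ * l x)
          = g x * n x * (a * (1 + l x)) - g x * a * (1 + l x) + n x * ((a * A₀) * l x) := by
            noncomm_ring
        _ = g x * n x * (a * (1 + l x)) - n x * (1 + l x) + n x * (1 * l x) := by
            rw [hga, haA]
        _ = q1 x := by simp only [q1_def, q_def, g_def]; noncomm_ring
    exact e ▸ h0
  have hq1' : ∀ x ∈ S, HasDerivAt q1 (q2 x) x := fun x hx =>
    ((hg' x hx).mul (hq' x hx)).sub (hn' x hx)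
  -- the third space derivative at x0
  set N : A := n x0 with N_def
  have hq2' : HasDerivAt q2
      ((-(N * A₀ * A₀) + 3 * (N * A₀ * (A₀ * N)) + 3 * (N * A₀ * (N * A₀)) -
        6 * (N * A₀ * (N * (A₀ * N)))) * (1 - A₀ * q x0)) x0 := by
    have hU : HasDerivAt (fun x => (g x * n x - g x) * A₀)
        ((((g x0 * n x0 - g x0) * A₀ * n x0 + g x0 * (g x0 * n x0 - g x0)) -
          (g x0 * n x0 - g x0) * A₀) * A₀) x0 :=
      ((((hg' x0 hx0S).mul (hn' x0 hx0S)).sub (hg' x0 hx0S)).mul_const A₀)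
    have h0 := ((hU.mul (hq' x0 hx0S)).add ((hg' x0 hx0S).mul (hq1' x0 hx0S))).sub
      (((hg' x0 hx0S).mul (hn' x0 hx0S)).sub (hg' x0 hx0S))
    have e : (((g x0 * n x0 - g x0) * A₀ * n x0 + g x0 * (g x0 * n x0 - g x0)) -
          (g x0 * n x0 - g x0) * A₀) * A₀ * q x0 + (g x0 * n x0 - g x0) * A₀ * q1 x0 +
          ((g x0 * n x0 - g x0) * A₀ * q1 x0 + g x0 * q2 x0) -
          ((g x0 * n x0 - g x0) * A₀ * n x0 + g x0 * (g x0 * n x0 - g x0) -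
            (g x0 * n x0 - g x0) * A₀) =
        (-(N * A₀ * A₀) + 3 * (N * A₀ * (A₀ * N)) + 3 * (N * A₀ * (N * A₀)) -
          6 * (N * A₀ * (N * (A₀ * N)))) * (1 - A₀ * q x0) := by
      simp only [q2_def, q1_def, g_def, N_def]
      noncomm_ring
    exact e ▸ h0
  -- identify px-iterates with q1, q2, q3 values
  have hQx : ∀ x : ℝ, Q (x, t0) = q x := by
    intro x
    simp only [hQ, hL]; rfl
  have hfun : (fun x' : ℝ => Q (x', t0)) = q := funext hQx
  have hpx1v : ∀ x ∈ S, px Q (x, t0) = q1 x := by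
    intro x hx
    show deriv (fun x' => Q (x', t0)) x = q1 x
    rw [hfun]
    exact (hq' x hx).deriv
  have hpx2v : ∀ x ∈ S, px (px Q) (x, t0) = q2 x := by
    intro x hx
    show deriv (fun x' => px Q (x', t0)) x = q2 x
    have hev : (fun x' => px Q (x', t0)) =ᶠ[nhds x] q1 := by
      filter_upwards [hSopen.mem_nhds hx] with y hy
      exact hpx1v y hy
    rw [hev.deriv_eq]
    exact (hq1' x hx).deriv
  have hpx3v : px (px (px Q)) (x0, t0) =
      (-(N * A₀ * A₀) + 3 * (N * A₀ * (A₀ * N)) + 3 * (N * A₀ * (N * A₀)) -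
        6 * (N * A₀ * (N * (A₀ * N)))) * (1 - A₀ * q x0) := by
    show deriv (fun x' => px (px Q) (x', t0)) x0 = _
    have hev : (fun x' => px (px Q) (x', t0)) =ᶠ[nhds x0] q2 := by
      filter_upwards [hSopen.mem_nhds hx0S] with y hy
      exact hpx2v y hy
    rw [hev.deriv_eq]
    exact hq2'.deriv
  -- the time derivative
  set m : ℝ → A := fun t => NormedSpace.exp (x0 • A₀ + t • A₀ ^ 3) * B with m_def
  have hmfun : m = fun t => NormedSpace.exp (t • A₀ ^ 3) *
      (NormedSpace.exp (x0 • A₀) * B) := by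
    funext t
    simp only [m_def]
    rw [add_comm, NormedSpace.exp_add_of_commute ((hcomm x0 t).symm), mul_assoc]
  have hm' : HasDerivAt m (A₀ ^ 3 * m t0) t0 := by
    rw [hmfun]
    simpa [mul_assoc] using
      (hasDerivAt_exp_smul_const' (𝕂 := ℝ) (A₀ ^ 3) t0).mul_const
        (NormedSpace.exp (x0 • A₀) * B)
  have hmt0 : m t0 = l x0 := rfl
  have hMm : IsUnit (1 - m t0) := hM
  have hnm' := hasDerivAt_ring_inverse_comp (hm'.const_sub 1) hMm
  have hqt0 := ((hnm'.mul_const a).mul (hm'.const_add 1))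
  have fpt : -(Ring.inverse (1 - m t0) * -(A₀ ^ 3 * m t0) * Ring.inverse (1 - m t0)) * a *
        (1 + m t0) + Ring.inverse (1 - m t0) * a * (A₀ ^ 3 * m t0) =
      -(N * A₀ * A₀) * (1 - A₀ * q x0) := by
    have hnn : Ring.inverse (1 - m t0) = N := rfl
    have hml : m t0 = l x0 := rfl
    rw [hnn, hml]
    have hax : a * (A₀ ^ 3 * l x0) = A₀ * (A₀ * l x0) := by
      have h1 : (A₀ : A) ^ 3 * l x0 = A₀ * (A₀ * (A₀ * l x0)) := by noncomm_ring
      rw [h1, ← mul_assoc, haA, one_mul]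
    have hXa : (A₀ : A) ^ 3 * a = A₀ * A₀ := by
      have h1 : (A₀ : A) ^ 3 * a = A₀ * A₀ * (A₀ * a) := by noncomm_ring
      rw [h1, hAa, mul_one]
    calc -(N * -(A₀ ^ 3 * l x0) * N) * a * (1 + l x0) + N * a * (A₀ ^ 3 * l x0)
        = N * A₀ ^ 3 * (l x0 * N) * (a * (1 + l x0)) + N * (a * (A₀ ^ 3 * l x0)) := by
          noncomm_ring
      _ = N * A₀ ^ 3 * (N - 1) * (a * (1 + l x0)) + N * (A₀ * (A₀ * l x0)) := by
          rw [N_def, hln x0 hx0S, hax]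
      _ = N * A₀ ^ 3 * (N * (a * (1 + l x0))) - N * (A₀ ^ 3 * a * (1 + l x0)) +
            N * (A₀ * (A₀ * l x0)) := by noncomm_ring
      _ = N * A₀ ^ 3 * (N * (a * (1 + l x0))) - N * (A₀ * A₀ * (1 + l x0)) +
            N * (A₀ * (A₀ * l x0)) := by rw [hXa]
      _ = -(N * A₀ * A₀) * (1 - A₀ * q x0) := by
          simp only [q_def, N_def]
          noncomm_ring
  have hQt : (fun t : ℝ => Q (x0, t)) =
      fun t => Ring.inverse (1 - m t) * a * (1 + m t) := by
    funext t
    simp only [hQ, hL]; rfl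
  have hptv : pt Q (x0, t0) = -(N * A₀ * A₀) * (1 - A₀ * q x0) := by
    show deriv (fun t => Q (x0, t)) t0 = _
    rw [hQt]
    rw [show (fun t => Ring.inverse (1 - m t) * a * (1 + m t)) =
      ((fun y => Ring.inverse (1 - m y) * a) * fun x => 1 + m x) from rfl, hqt0.deriv]
    exact fpt
  -- the inverse of Q p
  set r : A := Ring.inverse (1 + l x0) with r_def
  have hr1 : r * (1 + l x0) = 1 := Ring.inverse_mul_cancel _ hP
  have hr2 : (1 + l x0) * r = 1 := Ring.mul_inverse_cancel _ hP
  set v : A := r * A₀ * (1 - l x0) with v_def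
  have hv1 : q x0 * v = 1 := by
    calc q x0 * v = n x0 * a * ((1 + l x0) * r * (A₀ * (1 - l x0))) := by
          simp only [q_def, v_def]; noncomm_ring
      _ = n x0 * a * (1 * (A₀ * (1 - l x0))) := by rw [hr2]
      _ = n x0 * ((a * A₀) * (1 - l x0)) := by noncomm_ring
      _ = n x0 * (1 * (1 - l x0)) := by rw [haA]
      _ = 1 := by rw [one_mul]; exact hu1 x0 hx0S
  have hv2 : v * q x0 = 1 := by
    calc v * q x0 = r * (A₀ * ((1 - l x0) * n x0 * (a * (1 + l x0)))) := by
          simp only [q_def, v_def]; noncomm_ring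
      _ = r * (A₀ * (1 * (a * (1 + l x0)))) := by rw [hu2 x0 hx0S]
      _ = r * ((A₀ * a) * (1 + l x0)) := by noncomm_ring
      _ = r * (1 * (1 + l x0)) := by rw [hAa]
      _ = 1 := by rw [one_mul]; exact hr1
  have hQinv : Ring.inverse (Q (x0, t0)) = v := by
    rw [hQx x0]
    exact Ring.inverse_unit ⟨q x0, v, hv1, hv2⟩
  -- algebraic identities at x0
  have f1 : q2 x0 = (N * A₀ - 2 * (N * A₀ * N)) * (1 - A₀ * q x0) := by
    simp only [q2_def, q1_def, g_def, N_def]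
    noncomm_ring
  have f2 : q1 x0 = -(N * (1 - A₀ * q x0)) := by
    simp only [q1_def, g_def, N_def]
    noncomm_ring
  have f3 : (1 - A₀ * q x0) * v = v - A₀ := by
    rw [sub_mul, one_mul, mul_assoc, hv1, mul_one]
  have f4 : v * N = r * A₀ := by
    simp only [v_def, N_def]
    rw [mul_assoc, hu2 x0 hx0S, mul_one]
  have f5 : N * r + N * r = N + r := by
    have hNL : N * l x0 = N - 1 := hnl x0 hx0S
    have key : N * r + N * r - r = N := by
      calc N * r + N * r - r = (N + (N - 1)) * r := by noncomm_ring
        _ = (N + N * l x0) * r := by rw [hNL]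
        _ = N * ((1 + l x0) * r) := by noncomm_ring
        _ = N := by rw [hr2, mul_one]
    calc N * r + N * r = N * r + N * r - r + r := by noncomm_ring
      _ = N + r := by rw [key]
  have f6 : q2 x0 * v * q1 x0 =
      (N * A₀ * (A₀ * N) + N * A₀ * (N * A₀) - 2 * (N * A₀ * (N * (A₀ * N)))) *
        (1 - A₀ * q x0) := by
    calc q2 x0 * v * q1 x0
        = (N * A₀ - 2 * (N * A₀ * N)) * (1 - A₀ * q x0) * v * -(N * (1 - A₀ * q x0)) := by
          rw [f1, f2]
      _ = -((N * A₀ - 2 * (N * A₀ * N)) * ((1 - A₀ * q x0) * v * (N * (1 - A₀ * q x0)))) := by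
          noncomm_ring
      _ = -((N * A₀ - 2 * (N * A₀ * N)) * ((v - A₀) * (N * (1 - A₀ * q x0)))) := by rw [f3]
      _ = -((N * A₀ - 2 * (N * A₀ * N)) * (v * N - A₀ * N) * (1 - A₀ * q x0)) := by
          noncomm_ring
      _ = -((N * A₀ - 2 * (N * A₀ * N)) * (r * A₀ - A₀ * N) * (1 - A₀ * q x0)) := by rw [f4]
      _ = -((N * A₀ * (r * A₀) - N * A₀ * (A₀ * N) - N * A₀ * ((N * r + N * r) * A₀) +
            2 * (N * A₀ * (N * (A₀ * N)))) * (1 - A₀ * q x0)) := by noncomm_ring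
      _ = -((N * A₀ * (r * A₀) - N * A₀ * (A₀ * N) - N * A₀ * ((N + r) * A₀) +
            2 * (N * A₀ * (N * (A₀ * N)))) * (1 - A₀ * q x0)) := by rw [f5]
      _ = (N * A₀ * (A₀ * N) + N * A₀ * (N * A₀) - 2 * (N * A₀ * (N * (A₀ * N)))) *
            (1 - A₀ * q x0) := by noncomm_ring
  -- assemble
  rw [hptv, hpx3v, hpx2v x0 hx0S, hpx1v x0 hx0S, hQinv, f6]
  noncomm_ring
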